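/- Assume additionally that g = h ⊕ m is a B-orthogonal direct sum of linear subspaces with [h,h] ⊆ h, [h,m] ⊆ m, [m,m] ⊆ h, let π_m be the projection onto m along h, and set P = Σ_i π_m(e_i) ⊗ e^i ∈ U(g) ⊗ U(g). Then for every x ∈ m: [C, x⊗1] = [P, x⊗1 − 1⊗x] in U(g) ⊗ U(g). -/

import Mathlib

open scoped TensorProduct

noncomputable section

/-- The Casimir-type tensor `Σ i, u i ⊗ v i` in `U(g) ⊗ U(g)`. -/
def pairTensor (K : Type*) {L I : Type*} [Field K] [LieRing L] [LieAlgebra K L]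
    [Fintype I] (u v : I → L) :
    UniversalEnvelopingAlgebra K L ⊗[K] UniversalEnvelopingAlgebra K L :=
  ∑ i, UniversalEnvelopingAlgebra.ι K (u i) ⊗ₜ[K] UniversalEnvelopingAlgebra.ι K (v i)

/-- Let `g` be finite-dimensional with nondegenerate symmetric invariant form `B`, Casimir
tensor `C = Σ i, e i ⊗ e' i`.  Assume `g = h ⊕ m` is a `B`-orthogonal direct sum with
`[h,h] ⊆ h`, `[h,m] ⊆ m`, `[m,m] ⊆ h`, let `πm` be the projection onto `m` along `h`, and
set `P = Σ i, πm (e i) ⊗ e' i`.  Then for every `x ∈ m`: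
`[C, x⊗1] = [P, x⊗1 − 1⊗x]` in `U(g) ⊗ U(g)`. -/
theorem casimir_projection_identity
    {K L I : Type*} [Field K] [CharZero K] [LieRing L] [LieAlgebra K L]
    [Module.Finite K L] [Fintype I] [DecidableEq I]
    (B : LinearMap.BilinForm K L)
    (hBsymm : ∀ x y, B x y = B y x)
    (hBinv : ∀ x y z, B ⁅x, y⁆ z = B x ⁅y, z⁆)
    (hBnd : B.Nondegenerate)
    (e : Module.Basis I K L) (e' : I → L)
    (hdual : ∀ i j, B (e i) (e' j) = if i = j then 1 else 0)
    (H M : Submodule K L) (hcompl : IsCompl H M)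
    (horth : ∀ x ∈ H, ∀ y ∈ M, B x y = 0)
    (hHH : ∀ x ∈ H, ∀ y ∈ H, ⁅x, y⁆ ∈ H)
    (hHM : ∀ x ∈ H, ∀ y ∈ M, ⁅x, y⁆ ∈ M)
    (hMM : ∀ x ∈ M, ∀ y ∈ M, ⁅x, y⁆ ∈ H)
    (πm : L →ₗ[K] L)
    (hπmM : ∀ x, πm x ∈ M) (hπmId : ∀ x ∈ M, πm x = x) (hπmH : ∀ x ∈ H, πm x = 0) :
    ∀ x ∈ M,
      ⁅pairTensor K (⇑e) e', UniversalEnvelopingAlgebra.ι K x ⊗ₜ[K] 1⁆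
        = ⁅pairTensor K (fun i => πm (e i)) e',
            UniversalEnvelopingAlgebra.ι K x ⊗ₜ[K] 1
              - 1 ⊗ₜ[K] UniversalEnvelopingAlgebra.ι K x⁆ := by
  intro x hx
  classical
  -- coefficient of `v` along dual basis
  have hcoef : ∀ (v : L) (j : I), B v (e' j) = e.repr v j := by
    intro v j
    conv_lhs => rw [← e.sum_repr v]
    simp only [map_sum, LinearMap.sum_apply, map_smul, LinearMap.smul_apply, smul_eq_mul, hdual,
      mul_ite, mul_one, mul_zero, Finset.sum_ite_eq', Finset.mem_univ, if_true]
  -- expansion of any vector in the basis `e`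
  have hd1 : ∀ v : L, v = ∑ j, B v (e' j) • e j := by
    intro v
    conv_lhs => rw [← e.sum_repr v]
    exact Finset.sum_congr rfl fun j _ => by rw [hcoef]
  -- auxiliary: pairing of the `e'`-expansion against basis vectors
  have hbase : ∀ (j : I) (w : L), B (e j) (∑ i, B (e i) w • e' i) = B (e j) w := by
    intro j w
    simp [hdual, Finset.sum_ite_eq, mul_ite]
  have hall : ∀ (z w : L), B z (∑ i, B (e i) w • e' i) = B z w := by
    intro z w
    have h : B.flip (∑ i, B (e i) w • e' i) = B.flip w :=
      e.ext fun j => by simpa using hbase j w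
    simpa using DFunLike.congr_fun h z
  -- expansion of any vector in the dual family `e'`
  have hd2 : ∀ w : L, ∑ i, B (e i) w • e' i = w := by
    intro w
    have h0 : ∀ n, B ((∑ i, B (e i) w • e' i) - w) n = 0 := by
      intro n
      rw [map_sub, LinearMap.sub_apply, hBsymm (∑ i, B (e i) w • e' i) n, hBsymm w n,
        hall, sub_self]
    exact sub_eq_zero.mp (hBnd.1 _ h0)
  -- the adjoint-moving identity for the Casimir-type tensor in L ⊗ L
  have moveB : ∀ (f f' : L → L) (g : L →ₗ[K] L), (∀ a b, B (f a) b = B a (f' b)) →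
      (∑ i, f (e i) ⊗ₜ[K] g (e' i)) = ∑ j, (e j : L) ⊗ₜ[K] g (f' (e' j)) := by
    intro f f' g hadj
    calc ∑ i, f (e i) ⊗ₜ[K] g (e' i)
        = ∑ i, (∑ j, B (f (e i)) (e' j) • e j) ⊗ₜ[K] g (e' i) :=
          Finset.sum_congr rfl fun i _ => by rw [← hd1 (f (e i))]
      _ = ∑ i, ∑ j, B (e i) (f' (e' j)) • ((e j : L) ⊗ₜ[K] g (e' i)) := by
          refine Finset.sum_congr rfl fun i _ => ?_
          rw [TensorProduct.sum_tmul]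
          exact Finset.sum_congr rfl fun j _ => by
            rw [hadj, TensorProduct.smul_tmul']
      _ = ∑ j, ∑ i, B (e i) (f' (e' j)) • ((e j : L) ⊗ₜ[K] g (e' i)) := Finset.sum_comm
      _ = ∑ j, (e j : L) ⊗ₜ[K] (∑ i, B (e i) (f' (e' j)) • g (e' i)) := by
          refine Finset.sum_congr rfl fun j _ => ?_
          rw [TensorProduct.tmul_sum]
          exact Finset.sum_congr rfl fun i _ => (TensorProduct.tmul_smul _ _ _).symm
      _ = ∑ j, (e j : L) ⊗ₜ[K] g (f' (e' j)) := by
          refine Finset.sum_congr rfl fun j _ => ?_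
          congr 1
          rw [show (∑ i, B (e i) (f' (e' j)) • g (e' i))
              = g (∑ i, B (e i) (f' (e' j)) • e' i) by simp [map_sum, map_smul], hd2]
  -- πm is B-self-adjoint
  have hπadj : ∀ a b, B (πm a) b = B a (πm b) := by
    intro a b
    obtain ⟨ah, am, hah, ham, ha⟩ := Submodule.codisjoint_iff_exists_add_eq.mp hcompl.codisjoint a
    obtain ⟨bh, bm, hbh, hbm, hb⟩ := Submodule.codisjoint_iff_exists_add_eq.mp hcompl.codisjoint b
    have hπa : πm a = am := by
      rw [← ha, map_add, hπmH ah hah, hπmId am ham, zero_add]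
    have hπb : πm b = bm := by
      rw [← hb, map_add, hπmH bh hbh, hπmId bm hbm, zero_add]
    have h1 : B am bh = 0 := by rw [hBsymm]; exact horth bh hbh am ham
    have h2 : B ah bm = 0 := horth ah hah bm hbm
    rw [hπa, hπb, ← ha, ← hb]
    simp only [map_add, LinearMap.add_apply]
    rw [h1, h2]
  -- the splitting identity ⁅x, v⁆ = πm ⁅x, v⁆ + ⁅x, πm v⁆
  have hsplit : ∀ v : L, ⁅x, v⁆ = πm ⁅x, v⁆ + ⁅x, πm v⁆ := by
    intro v
    obtain ⟨vh, vm, hvh, hvm, hv⟩ := Submodule.codisjoint_iff_exists_add_eq.mp hcompl.codisjoint v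
    have h1 : ⁅x, vh⁆ ∈ M := by
      have := hHM vh hvh x hx
      simpa using M.neg_mem this
    have h2 : ⁅x, vm⁆ ∈ H := hMM x hx vm hvm
    have hπv : πm v = vm := by
      rw [← hv, map_add, hπmH vh hvh, hπmId vm hvm, zero_add]
    rw [hπv, ← hv, lie_add, map_add, hπmId _ h1, hπmH _ h2, add_zero]
  -- the key identity in L ⊗ L
  have adj1 : ∀ a b : L, B ⁅a, x⁆ b = B a ⁅x, b⁆ := fun a b => hBinv a x b
  have adj2 : ∀ a b : L, B ⁅πm a, x⁆ b = B a (πm ⁅x, b⁆) := by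
    intro a b
    rw [hBinv (πm a) x b, hπadj]
  have m1 := moveB (fun a => ⁅a, x⁆) (fun b => ⁅x, b⁆) LinearMap.id adj1
  have m2 := moveB (fun a => ⁅πm a, x⁆) (fun b => πm ⁅x, b⁆) LinearMap.id adj2
  have m3 := moveB (fun a => πm a) (fun b => πm b) (LieAlgebra.ad K L x) hπadj
  simp only [LinearMap.id_coe, id_eq, LieAlgebra.ad_apply] at m1 m2 m3
  have keyA : (∑ i, ⁅(e i : L), x⁆ ⊗ₜ[K] e' i)
      = ∑ i, (⁅πm (e i), x⁆ ⊗ₜ[K] e' i + πm (e i) ⊗ₜ[K] ⁅x, e' i⁆) := by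
    rw [Finset.sum_add_distrib, m1, m2, m3, ← Finset.sum_add_distrib]
    refine Finset.sum_congr rfl fun j _ => ?_
    rw [← TensorProduct.tmul_add, ← hsplit (e' j)]
  -- now lift to U(g) ⊗ U(g)
  letI : LieRing (UniversalEnvelopingAlgebra K L) := LieRing.ofAssociativeRing
  have hU1 : ⁅pairTensor K (⇑e) e',
        UniversalEnvelopingAlgebra.ι K x ⊗ₜ[K] (1 : UniversalEnvelopingAlgebra K L)⁆
      = TensorProduct.map (UniversalEnvelopingAlgebra.ι K (L := L)).toLinearMap
          (UniversalEnvelopingAlgebra.ι K (L := L)).toLinearMap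
          (∑ i, ⁅(e i : L), x⁆ ⊗ₜ[K] e' i) := by
    rw [pairTensor, Ring.lie_def, Finset.sum_mul, Finset.mul_sum, ← Finset.sum_sub_distrib,
      map_sum]
    refine Finset.sum_congr rfl fun i _ => ?_
    rw [Algebra.TensorProduct.tmul_mul_tmul, Algebra.TensorProduct.tmul_mul_tmul, mul_one,
      one_mul, ← TensorProduct.sub_tmul, TensorProduct.map_tmul]
    simp only [LieHom.coe_toLinearMap]
    rw [LieHom.map_lie, Ring.lie_def]
  have hU2 : ⁅pairTensor K (fun i => πm (e i)) e',
        UniversalEnvelopingAlgebra.ι K x ⊗ₜ[K] (1 : UniversalEnvelopingAlgebra K L)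
          - 1 ⊗ₜ[K] UniversalEnvelopingAlgebra.ι K x⁆
      = TensorProduct.map (UniversalEnvelopingAlgebra.ι K (L := L)).toLinearMap
          (UniversalEnvelopingAlgebra.ι K (L := L)).toLinearMap
          (∑ i, (⁅πm (e i), x⁆ ⊗ₜ[K] e' i + πm (e i) ⊗ₜ[K] ⁅x, e' i⁆)) := by
    rw [pairTensor, Ring.lie_def, Finset.sum_mul, Finset.mul_sum, ← Finset.sum_sub_distrib,
      map_sum]
    refine Finset.sum_congr rfl fun i _ => ?_
    rw [mul_sub, sub_mul]
    simp only [Algebra.TensorProduct.tmul_mul_tmul, mul_one, one_mul, map_add,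
      TensorProduct.map_tmul, LieHom.coe_toLinearMap, LieHom.map_lie, Ring.lie_def,
      TensorProduct.sub_tmul, TensorProduct.tmul_sub]
    abel
  rw [hU1, hU2, keyA]
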